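/- The Hausdorff dimension of the Cantor dust CD (the attractor of the IFS {x/3, x/3+(0,2/3), x/3+(2/3,0), x/3+(2/3,2/3)} on [0,1]²) equals log 4 / log 3. -/

import Mathlib

open Set Filter MeasureTheory
open scoped ENNReal NNReal

noncomputable section
namespace CantorDustAux

/-- digit value for ternary expansion -/
def xd (s : Bool) : ℝ := if s then 2 else 0
/-- digit value for binary expansion -/
def yd (s : Bool) : ℝ := if s then 1 else 0

lemma xd_nonneg (s : Bool) : 0 ≤ xd s := by cases s <;> simp [xd]
lemma xd_le (s : Bool) : xd s ≤ 2 := by cases s <;> simp [xd]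
lemma yd_nonneg (s : Bool) : 0 ≤ yd s := by cases s <;> simp [yd]
lemma yd_le (s : Bool) : yd s ≤ 1 := by cases s <;> simp [yd]

lemma summable_aux {r : ℝ} (h0 : 0 ≤ r) (h1 : r < 1) (f : ℕ → ℝ) (h : ∀ i, 0 ≤ f i)
    (h2 : ∀ i, f i ≤ 2) : Summable (fun i => f i * r ^ (i + 1)) := by
  have hg : Summable (fun i : ℕ => 2 * r ^ (i + 1)) := by
    have : Summable (fun i : ℕ => (2 * r) * r ^ i) :=
      (summable_geometric_of_lt_one h0 h1).mul_left _
    refine this.congr fun i => by ring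
  refine Summable.of_nonneg_of_le (fun i => mul_nonneg (h i) (pow_nonneg h0 _))
    (fun i => ?_) hg
  exact mul_le_mul_of_nonneg_right (h2 i) (pow_nonneg h0 _)

lemma tsum_two_mul_geom {r : ℝ} (h0 : 0 ≤ r) (h1 : r < 1) :
    ∑' i : ℕ, 2 * r ^ (i + 1) = 2 * r / (1 - r) := by
  have : ∀ i : ℕ, 2 * r ^ (i + 1) = (2 * r) * r ^ i := fun i => by ring
  rw [tsum_congr this, tsum_mul_left, tsum_geometric_of_lt_one h0 h1]
  field_simp

/-- The point of the Cantor set with digit sequence `b`. -/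
def X (b : ℕ → Bool) : ℝ := ∑' i, xd (b i) * (1/3 : ℝ) ^ (i + 1)
/-- The point of `[0,1]` with binary digit sequence `b`. -/
def Y (b : ℕ → Bool) : ℝ := ∑' i, yd (b i) * (1/2 : ℝ) ^ (i + 1)

lemma summableX (b : ℕ → Bool) : Summable (fun i => xd (b i) * (1/3 : ℝ) ^ (i + 1)) :=
  summable_aux (by norm_num) (by norm_num) _ (fun i => xd_nonneg _) (fun i => xd_le _)

lemma summableY (b : ℕ → Bool) : Summable (fun i => yd (b i) * (1/2 : ℝ) ^ (i + 1)) :=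
  summable_aux (by norm_num) (by norm_num) _ (fun i => yd_nonneg _)
    (fun i => (yd_le _).trans (by norm_num))

/-- tail bounds for X -/
lemma X_tail (b : ℕ → Bool) (n : ℕ) :
    0 ≤ X b - ∑ i ∈ Finset.range n, xd (b i) * (1/3 : ℝ) ^ (i + 1) ∧
      X b - ∑ i ∈ Finset.range n, xd (b i) * (1/3 : ℝ) ^ (i + 1) ≤ (1/3 : ℝ) ^ n := by
  have hs := summableX b
  have key := hs.sum_add_tsum_nat_add n
  have htail : X b - ∑ i ∈ Finset.range n, xd (b i) * (1/3 : ℝ) ^ (i + 1)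
      = ∑' i, xd (b (i + n)) * (1/3 : ℝ) ^ (i + n + 1) := by
    rw [X, ← key]; ring
  rw [htail]
  have hsum : Summable (fun i => xd (b (i + n)) * (1/3 : ℝ) ^ (i + n + 1)) :=
    (summableX b).comp_injective (add_left_injective n)
  constructor
  · exact tsum_nonneg fun i => mul_nonneg (xd_nonneg _) (by positivity)
  · have hle : ∀ i : ℕ, xd (b (i + n)) * (1/3 : ℝ) ^ (i + n + 1)
        ≤ (1/3 : ℝ) ^ n * (2 * (1/3 : ℝ) ^ (i + 1)) := by
      intro i
      have : ((1:ℝ)/3) ^ (i + n + 1) = (1/3 : ℝ) ^ n * (1/3 : ℝ) ^ (i + 1) := by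
        rw [← pow_add]; ring_nf
      rw [this]
      calc xd (b (i + n)) * ((1/3 : ℝ) ^ n * (1/3 : ℝ) ^ (i + 1))
          ≤ 2 * ((1/3 : ℝ) ^ n * (1/3 : ℝ) ^ (i + 1)) := by
            exact mul_le_mul_of_nonneg_right (xd_le _) (by positivity)
        _ = (1/3 : ℝ) ^ n * (2 * (1/3 : ℝ) ^ (i + 1)) := by ring
    have hsum2 : Summable (fun i : ℕ => (1/3 : ℝ) ^ n * (2 * (1/3 : ℝ) ^ (i + 1))) :=
      (summable_aux (by norm_num) (by norm_num) (fun _ => 2) (fun _ => by norm_num)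
        (fun _ => le_refl 2)).mul_left _
    calc (∑' i, xd (b (i + n)) * (1/3 : ℝ) ^ (i + n + 1))
        ≤ ∑' i : ℕ, (1/3 : ℝ) ^ n * (2 * (1/3 : ℝ) ^ (i + 1)) := Summable.tsum_le_tsum hle hsum hsum2
      _ = (1/3 : ℝ) ^ n * (2 * (1/3 : ℝ) / (1 - 1/3)) := by
          rw [tsum_mul_left, tsum_two_mul_geom (by norm_num) (by norm_num)]
      _ = (1/3 : ℝ) ^ n := by norm_num

lemma Y_tail (b : ℕ → Bool) (n : ℕ) :
    0 ≤ Y b - ∑ i ∈ Finset.range n, yd (b i) * (1/2 : ℝ) ^ (i + 1) ∧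
      Y b - ∑ i ∈ Finset.range n, yd (b i) * (1/2 : ℝ) ^ (i + 1) ≤ (1/2 : ℝ) ^ n := by
  have hs := summableY b
  have key := hs.sum_add_tsum_nat_add n
  have htail : Y b - ∑ i ∈ Finset.range n, yd (b i) * (1/2 : ℝ) ^ (i + 1)
      = ∑' i, yd (b (i + n)) * (1/2 : ℝ) ^ (i + n + 1) := by
    rw [Y, ← key]; ring
  rw [htail]
  have hsum : Summable (fun i => yd (b (i + n)) * (1/2 : ℝ) ^ (i + n + 1)) :=
    (summableY b).comp_injective (add_left_injective n)
  constructor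
  · exact tsum_nonneg fun i => mul_nonneg (yd_nonneg _) (by positivity)
  · have hle : ∀ i : ℕ, yd (b (i + n)) * (1/2 : ℝ) ^ (i + n + 1)
        ≤ (1/2 : ℝ) ^ n * (1/2 : ℝ) ^ (i + 1) := by
      intro i
      have : ((1:ℝ)/2) ^ (i + n + 1) = (1/2 : ℝ) ^ n * (1/2 : ℝ) ^ (i + 1) := by
        rw [← pow_add]; ring_nf
      rw [this]
      nlinarith [yd_le (b (i + n)), yd_nonneg (b (i + n)),
        pow_nonneg (by norm_num : (0:ℝ) ≤ 1/2) (i + n + 1),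
        mul_le_mul_of_nonneg_right (yd_le (b (i+n)))
          (by positivity : (0:ℝ) ≤ (1/2 : ℝ) ^ n * (1/2 : ℝ) ^ (i + 1))]
    have hsum2 : Summable (fun i : ℕ => (1/2 : ℝ) ^ n * (1/2 : ℝ) ^ (i + 1)) := by
      have : Summable (fun i : ℕ => ((1:ℝ)/2) ^ (i+1)) := by
        have h := summable_geometric_of_lt_one (by norm_num : (0:ℝ) ≤ 1/2) (by norm_num)
        exact (h.mul_left (1/2)).congr fun i => by rw [pow_succ]; ring
      exact this.mul_left _
    calc (∑' i, yd (b (i + n)) * (1/2 : ℝ) ^ (i + n + 1))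
        ≤ ∑' i : ℕ, (1/2 : ℝ) ^ n * (1/2 : ℝ) ^ (i + 1) := Summable.tsum_le_tsum hle hsum hsum2
      _ = (1/2 : ℝ) ^ n * ((1/2 : ℝ) / (1 - 1/2)) := by
          rw [tsum_mul_left]
          congr 1
          have : ∀ i : ℕ, ((1:ℝ)/2) ^ (i+1) = (1/2) * (1/2 : ℝ) ^ i := fun i => by
            rw [pow_succ]; ring
          rw [tsum_congr this, tsum_mul_left,
            tsum_geometric_of_lt_one (by norm_num) (by norm_num)]
          norm_num
      _ = (1/2 : ℝ) ^ n := by norm_num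

lemma X_mem_Icc (b : ℕ → Bool) : X b ∈ Icc (0:ℝ) 1 := by
  have h := X_tail b 0
  simp only [Finset.range_zero, Finset.sum_empty, sub_zero, pow_zero] at h
  exact ⟨h.1, h.2⟩

lemma Y_mem_Icc (b : ℕ → Bool) : Y b ∈ Icc (0:ℝ) 1 := by
  have h := Y_tail b 0
  simp only [Finset.range_zero, Finset.sum_empty, sub_zero, pow_zero] at h
  exact ⟨h.1, h.2⟩

end CantorDustAux

namespace CantorDustAux

/-- If digit sequences agree below `n`, the Y-values differ by at most `(1/2)^n`. -/
lemma Y_close {b c : ℕ → Bool} {n : ℕ} (h : ∀ i < n, b i = c i) :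
    |Y b - Y c| ≤ (1/2 : ℝ) ^ n := by
  have hsum : ∑ i ∈ Finset.range n, yd (b i) * (1/2 : ℝ) ^ (i + 1)
      = ∑ i ∈ Finset.range n, yd (c i) * (1/2 : ℝ) ^ (i + 1) := by
    refine Finset.sum_congr rfl fun i hi => ?_
    rw [h i (Finset.mem_range.1 hi)]
  have h1 := Y_tail b n
  have h2 := Y_tail c n
  rw [abs_le]
  constructor <;> nlinarith [h1.1, h1.2, h2.1, h2.2]

/-- If digit sequences agree below `n` but differ at `n`, the X-values differ
by at least `(1/3)^(n+1)`. -/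
lemma X_far {b c : ℕ → Bool} {n : ℕ} (h : ∀ i < n, b i = c i) (hn : b n ≠ c n) :
    (1/3 : ℝ) ^ (n + 1) ≤ |X b - X c| := by
  -- partial sums up to n+1 differ by exactly 2 * (1/3)^(n+1)
  have hsum : ∀ i < n, xd (b i) * (1/3 : ℝ) ^ (i + 1) = xd (c i) * (1/3 : ℝ) ^ (i + 1) := by
    intro i hi; rw [h i hi]
  have hdiff : |xd (b n) - xd (c n)| = 2 := by
    cases hb : b n <;> cases hc : c n <;> simp_all [xd]
  have hps : |(∑ i ∈ Finset.range (n+1), xd (b i) * (1/3 : ℝ) ^ (i + 1))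
      - ∑ i ∈ Finset.range (n+1), xd (c i) * (1/3 : ℝ) ^ (i + 1)| = 2 * (1/3 : ℝ) ^ (n+1) := by
    rw [Finset.sum_range_succ, Finset.sum_range_succ,
      Finset.sum_congr rfl (fun i hi => hsum i (Finset.mem_range.1 hi))]
    have : (∑ i ∈ Finset.range n, xd (c i) * (1/3 : ℝ) ^ (i + 1)) + xd (b n) * (1/3:ℝ)^(n+1)
        - ((∑ i ∈ Finset.range n, xd (c i) * (1/3 : ℝ) ^ (i + 1)) + xd (c n) * (1/3:ℝ)^(n+1))
        = (xd (b n) - xd (c n)) * (1/3:ℝ)^(n+1) := by ring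
    rw [this, abs_mul, hdiff, abs_of_nonneg (by positivity : (0:ℝ) ≤ (1/3:ℝ)^(n+1))]
  have h1 := X_tail b (n+1)
  have h2 := X_tail c (n+1)
  rw [abs_eq (by positivity)] at hps
  rcases hps with hps | hps
  · rw [abs_sub_comm]
    rw [le_abs]
    right
    nlinarith [h1.1, h1.2, h2.1, h2.2]
  · rw [le_abs]
    right
    nlinarith [h1.1, h1.2, h2.1, h2.2]

lemma X_injective : Function.Injective X := by
  intro b c hbc
  by_contra hne
  have hex : ∃ n, b n ≠ c n := by
    by_contra h
    push_neg at h
    exact hne (funext h)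
  classical
  let n := Nat.find hex
  have hn : b n ≠ c n := Nat.find_spec hex
  have hlt : ∀ i < n, b i = c i := fun i hi => by
    by_contra h
    exact Nat.find_min hex hi h
  have := X_far hlt hn
  rw [hbc, sub_self, abs_zero] at this
  have : (0:ℝ) < (1/3:ℝ)^(n+1) := by positivity
  linarith [X_far hlt hn, hbc ▸ (by rw [hbc, sub_self, abs_zero] : |X b - X c| = 0)]

/-- the Hölder exponent -/
def α : ℝ := Real.log 2 / Real.log 3

lemma α_pos : 0 < α := div_pos (Real.log_pos one_lt_two) (Real.log_pos (by norm_num))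

lemma rpow_three_alpha : (3 : ℝ) ^ α = 2 := by
  rw [Real.rpow_def_of_pos (by norm_num : (0:ℝ) < 3), α]
  rw [mul_div_assoc', mul_comm, mul_div_assoc, div_self (ne_of_gt (Real.log_pos (by norm_num))),
    mul_one, Real.exp_log (by norm_num)]

lemma rpow_third_alpha : ((1/3 : ℝ)) ^ α = 1/2 := by
  rw [show (1/3 : ℝ) = 3⁻¹ by norm_num, Real.inv_rpow (by norm_num), rpow_three_alpha]
  norm_num

/-- The key Hölder estimate between the two coding maps. -/
lemma Y_holder (b c : ℕ → Bool) : |Y b - Y c| ≤ 2 * |X b - X c| ^ α := by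
  rcases eq_or_ne b c with rfl | hne
  · simp only [sub_self, abs_zero]
    positivity
  have hex : ∃ n, b n ≠ c n := by
    by_contra h
    push_neg at h
    exact hne (funext h)
  classical
  set n := Nat.find hex with hn_def
  have hn : b n ≠ c n := Nat.find_spec hex
  have hlt : ∀ i < n, b i = c i := fun i hi => by
    by_contra h
    exact Nat.find_min hex hi h
  have hY : |Y b - Y c| ≤ (1/2 : ℝ) ^ n := Y_close hlt
  have hX : (1/3 : ℝ) ^ (n + 1) ≤ |X b - X c| := X_far hlt hn
  have key : ((1/3 : ℝ) ^ (n+1)) ^ α = (1/2 : ℝ) ^ (n+1) := by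
    rw [← Real.rpow_natCast (1/3 : ℝ) (n+1), ← Real.rpow_mul (by norm_num), mul_comm,
      Real.rpow_mul (by norm_num), rpow_third_alpha, Real.rpow_natCast]
  have hmono : ((1/3 : ℝ) ^ (n+1)) ^ α ≤ |X b - X c| ^ α :=
    Real.rpow_le_rpow (by positivity) hX (le_of_lt α_pos)
  calc |Y b - Y c| ≤ (1/2 : ℝ) ^ n := hY
    _ = 2 * (1/2 : ℝ) ^ (n+1) := by rw [pow_succ]; ring
    _ = 2 * ((1/3 : ℝ) ^ (n+1)) ^ α := by rw [key]
    _ ≤ 2 * |X b - X c| ^ α := by linarith [hmono]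


/-! ### The one-dimensional Cantor set structure -/

/-- pre-Cantor sets -/
def pre : ℕ → Set ℝ
  | 0 => Icc 0 1
  | n+1 => (fun x : ℝ => x/3) '' pre n ∪ (fun x : ℝ => x/3 + 2/3) '' pre n

lemma pre_subset : ∀ n, pre n ⊆ Icc (0:ℝ) 1
  | 0 => subset_rfl
  | n+1 => by
    rintro x (⟨y, hy, rfl⟩ | ⟨y, hy, rfl⟩) <;>
      obtain ⟨h0, h1⟩ := pre_subset n hy <;> constructor <;> simp <;> linarith

/-- the shift map on the Cantor set -/
def s3 (x : ℝ) : ℝ := if x ≤ 1/2 then 3*x else 3*x - 2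

/-- digit extraction -/
def dg (x : ℝ) (i : ℕ) : Bool := decide (¬ (s3^[i] x ≤ 1/2))

lemma mem_pre_succ {x : ℝ} {n : ℕ} (h : x ∈ pre (n+1)) :
    s3 x ∈ pre n ∧ x = (s3 x)/3 + xd (dg x 0)/3 := by
  have hdg0 : dg x 0 = decide (¬ (x ≤ 1/2)) := by simp [dg]
  rcases h with ⟨y, hy, rfl⟩ | ⟨y, hy, rfl⟩
  · obtain ⟨h0, h1⟩ := pre_subset n hy
    have hle : y/3 ≤ 1/2 := by linarith
    have hs : s3 (y/3) = y := by simp only [s3]; rw [if_pos hle]; ring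
    refine ⟨by rw [hs]; exact hy, ?_⟩
    rw [hs, hdg0, decide_eq_false (by simpa using hle)]
    simp [xd]
  · obtain ⟨h0, h1⟩ := pre_subset n hy
    have hle : ¬ (y/3 + 2/3 ≤ 1/2) := by push_neg; linarith
    have hs : s3 (y/3 + 2/3) = y := by simp only [s3]; rw [if_neg hle]; ring
    refine ⟨by rw [hs]; exact hy, ?_⟩
    rw [hs, hdg0, decide_eq_true (by simpa using hle)]
    simp [xd]

lemma dg_shift (x : ℝ) (i : ℕ) : dg x (i+1) = dg (s3 x) i := by
  simp [dg, Function.iterate_succ_apply]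

/-- digit extraction approximates -/
lemma dg_approx : ∀ n, ∀ x : ℝ, (∀ m, x ∈ pre m) →
    |x - ∑ i ∈ Finset.range n, xd (dg x i) * (1/3 : ℝ) ^ (i + 1)| ≤ (1/3 : ℝ) ^ n := by
  intro n
  induction n with
  | zero =>
    intro x hx
    obtain ⟨h0, h1⟩ := pre_subset 0 (hx 0)
    simp [abs_le]
    constructor <;> linarith
  | succ n ih =>
    intro x hx
    have hx1 := mem_pre_succ (hx 1)
    have hx' : ∀ m, s3 x ∈ pre m := fun m => (mem_pre_succ (hx (m+1))).1
    have ihx := ih (s3 x) hx'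
    have hsum : ∑ i ∈ Finset.range (n+1), xd (dg x i) * (1/3 : ℝ) ^ (i + 1)
        = xd (dg x 0) / 3
          + (∑ i ∈ Finset.range n, xd (dg (s3 x) i) * (1/3 : ℝ) ^ (i + 1)) / 3 := by
      rw [Finset.sum_range_succ']
      rw [Finset.sum_div]
      have : ∀ i ∈ Finset.range n,
          xd (dg x (i+1)) * (1/3 : ℝ) ^ (i + 1 + 1)
            = xd (dg (s3 x) i) * (1/3 : ℝ) ^ (i + 1) / 3 := by
        intro i _
        rw [dg_shift]
        ring
      rw [Finset.sum_congr rfl this]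
      ring
    rw [hsum]
    obtain ⟨-, hxeq⟩ := hx1
    set y := s3 x with hy_def
    set e := xd (dg x 0) with he_def
    set S := ∑ i ∈ Finset.range n, xd (dg y i) * (1/3 : ℝ) ^ (i + 1) with hS_def
    have hp : ((1:ℝ)/3)^(n+1) = (1/3:ℝ)^n / 3 := by rw [pow_succ]; ring
    rw [hxeq, hp]
    rw [abs_le] at ihx ⊢
    constructor <;> [linarith [ihx.1]; linarith [ihx.2]]

/-- If `x` lies in every pre-Cantor set, it has a digit expansion. -/
lemma X_dg_eq {x : ℝ} (hx : ∀ m, x ∈ pre m) : X (dg x) = x := by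
  have key : ∀ n : ℕ, |X (dg x) - x| ≤ 2 * (1/3:ℝ)^n := by
    intro n
    have h1 := dg_approx n x hx
    have h2 := X_tail (dg x) n
    have := abs_sub_abs_le_abs_sub (X (dg x)) x
    calc |X (dg x) - x|
        ≤ |X (dg x) - ∑ i ∈ Finset.range n, xd (dg x i) * (1/3:ℝ)^(i+1)|
          + |(∑ i ∈ Finset.range n, xd (dg x i) * (1/3:ℝ)^(i+1)) - x| := by
          have := abs_sub_le (X (dg x)) (∑ i ∈ Finset.range n, xd (dg x i) * (1/3:ℝ)^(i+1)) x
          linarith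
      _ ≤ (1/3:ℝ)^n + (1/3:ℝ)^n := by
          rw [abs_sub_comm (∑ i ∈ Finset.range n, xd (dg x i) * (1/3:ℝ)^(i+1)) x]
          refine add_le_add ?_ h1
          rw [abs_le]; constructor <;> linarith [h2.1, h2.2]
      _ = 2 * (1/3:ℝ)^n := by ring
  have hlim : Tendsto (fun n : ℕ => 2 * (1/3:ℝ)^n) atTop (nhds 0) := by
    have := tendsto_pow_atTop_nhds_zero_of_lt_one (by norm_num : (0:ℝ) ≤ 1/3) (by norm_num)
    simpa using this.const_mul 2
  have : |X (dg x) - x| ≤ 0 := ge_of_tendsto' hlim key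
  have := abs_nonneg (X (dg x) - x)
  have : |X (dg x) - x| = 0 := le_antisymm ‹|X (dg x) - x| ≤ 0› ‹0 ≤ |X (dg x) - x|›
  rw [abs_eq_zero] at this
  linarith [this]

/-- every `X b` lies in every pre-Cantor set -/
lemma X_shift (b : ℕ → Bool) : X b = xd (b 0) / 3 + X (fun i => b (i+1)) / 3 := by
  have hs := summableX b
  have h0 := hs.tsum_eq_zero_add
  rw [X, h0]
  have : ∀ i : ℕ, xd (b (i+1)) * (1/3 : ℝ) ^ (i + 1 + 1)
      = (xd (b (i+1)) * (1/3 : ℝ) ^ (i+1)) / 3 := fun i => by ring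
  rw [tsum_congr this, tsum_div_const]
  rw [X]
  ring

lemma X_mem_pre (b : ℕ → Bool) : ∀ m, X b ∈ pre m := by
  intro m
  induction m generalizing b with
  | zero => exact X_mem_Icc b
  | succ m ih =>
    rw [X_shift b]
    cases hb : b 0
    · left
      exact ⟨X (fun i => b (i+1)), ih _, by simp [hb, xd]⟩
    · right
      exact ⟨X (fun i => b (i+1)), ih _, by simp [hb, xd]; ring⟩

lemma dg_X (b : ℕ → Bool) : dg (X b) = b :=
  X_injective (X_dg_eq (X_mem_pre b))


/-! ### Binary expansions: `Y` is onto `[0,1)` -/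

/-- binary digits of a real number -/
def bdig (u : ℝ) (i : ℕ) : Bool := decide ((⌊u * 2^(i+1)⌋ - 2 * ⌊u * 2^i⌋ : ℤ) = 1)

lemma floor_two_mul (x : ℝ) : ⌊2*x⌋ = 2 * ⌊x⌋ ∨ ⌊2*x⌋ = 2 * ⌊x⌋ + 1 := by
  have h1 : (2:ℤ) * ⌊x⌋ ≤ ⌊2*x⌋ := by
    rw [Int.le_floor]
    push_cast
    nlinarith [Int.floor_le x]
  have h2 : ⌊2*x⌋ < 2 * ⌊x⌋ + 2 := by
    rw [Int.floor_lt]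
    push_cast
    nlinarith [Int.lt_floor_add_one x]
  omega

lemma yd_bdig (u : ℝ) (i : ℕ) :
    yd (bdig u i) = ((⌊u * 2^(i+1)⌋ : ℤ) : ℝ) - 2 * ((⌊u * 2^i⌋ : ℤ) : ℝ) := by
  have h := floor_two_mul (u * 2^i)
  have he : 2 * (u * 2^i) = u * 2^(i+1) := by ring
  rw [he] at h
  rcases h with h | h
  · have hb : bdig u i = false := by simp [bdig]; omega
    rw [hb]
    simp [yd]
    rw [h]
    push_cast
    ring
  · have hb : bdig u i = true := by simp [bdig]; omega
    rw [hb]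
    simp [yd]
    rw [h]
    push_cast
    ring

lemma bdig_partial (u : ℝ) (hu : u ∈ Ico (0:ℝ) 1) (n : ℕ) :
    ∑ i ∈ Finset.range n, yd (bdig u i) * (1/2 : ℝ)^(i+1)
      = ((⌊u * 2^n⌋ : ℤ) : ℝ) / 2^n := by
  induction n with
  | zero =>
    simp
    rw [Int.floor_eq_zero_iff.2]
    · simp
    · exact ⟨hu.1, hu.2⟩
  | succ n ih =>
    rw [Finset.sum_range_succ, ih, yd_bdig]
    have h2 : ((2:ℝ))^(n+1) ≠ 0 := by positivity
    rw [one_div_pow]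
    field_simp
    ring
  
lemma Y_bdig (u : ℝ) (hu : u ∈ Ico (0:ℝ) 1) : Y (bdig u) = u := by
  have key : ∀ n : ℕ, |Y (bdig u) - u| ≤ 2 * (1/2:ℝ)^n := by
    intro n
    have h1 := Y_tail (bdig u) n
    rw [bdig_partial u hu n] at h1
    have hfl : |u - ((⌊u * 2^n⌋ : ℤ) : ℝ) / 2^n| ≤ (1/2:ℝ)^n := by
      have hle := Int.floor_le (u * 2^n)
      have hlt := Int.lt_floor_add_one (u * 2^n)
      have h2 : (0:ℝ) < 2^n := by positivity
      have hpow : ((1:ℝ)/2)^n * 2^n = 1 := by rw [← mul_pow]; norm_num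
      have hquot : ((⌊u * 2^n⌋ : ℤ) : ℝ) / 2^n * 2^n = ((⌊u * 2^n⌋ : ℤ) : ℝ) := by
        field_simp
      rw [abs_le]
      constructor <;> nlinarith [mul_le_mul_of_nonneg_right hle (le_of_lt (inv_pos.2 h2)),
        mul_pos h2 (pow_pos (by norm_num : (0:ℝ) < 1/2) n)]
    calc |Y (bdig u) - u|
        ≤ |Y (bdig u) - ((⌊u * 2^n⌋ : ℤ) : ℝ) / 2^n| + |((⌊u * 2^n⌋ : ℤ) : ℝ) / 2^n - u| := by
          have := abs_sub_le (Y (bdig u)) (((⌊u * 2^n⌋ : ℤ) : ℝ) / 2^n) u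
          linarith
      _ ≤ (1/2:ℝ)^n + (1/2:ℝ)^n := by
          refine add_le_add ?_ (by rw [abs_sub_comm]; exact hfl)
          rw [abs_le]; constructor <;> linarith [h1.1, h1.2]
      _ = 2 * (1/2:ℝ)^n := by ring
  have hlim : Tendsto (fun n : ℕ => 2 * (1/2:ℝ)^n) atTop (nhds 0) := by
    have := tendsto_pow_atTop_nhds_zero_of_lt_one (by norm_num : (0:ℝ) ≤ 1/2) (by norm_num)
    simpa using this.const_mul 2
  have h0 : |Y (bdig u) - u| ≤ 0 := ge_of_tendsto' hlim key
  have h1 := abs_nonneg (Y (bdig u) - u)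
  have : Y (bdig u) - u = 0 := abs_eq_zero.mp (le_antisymm h0 h1)
  linarith


/-! ### Two-dimensional structure -/

lemma eq_of_abs_le_geom {x r : ℝ} (h0 : 0 ≤ r) (h1 : r < 1)
    (h : ∀ n : ℕ, |x| ≤ 2 * r ^ n) : x = 0 := by
  have hlim : Tendsto (fun n : ℕ => 2 * r ^ n) atTop (nhds 0) := by
    have := tendsto_pow_atTop_nhds_zero_of_lt_one h0 h1
    simpa using this.const_mul 2
  have h0' : |x| ≤ 0 := ge_of_tendsto' hlim h
  have := abs_nonneg x
  exact abs_eq_zero.mp (le_antisymm h0' this)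

/-- the four similitudes -/
def F (s t : Bool) (p : ℝ × ℝ) : ℝ × ℝ := (p.1/3 + xd s/3, p.2/3 + xd t/3)

lemma F_cont (s t : Bool) : Continuous (F s t) := by
  unfold F; fun_prop

section CD

variable {CD : Set (ℝ × ℝ)}
  (hCDsub : CD ⊆ Set.Icc (0, 0) (1, 1))
  (hCDne : CD.Nonempty) (hCDcomp : IsCompact CD)
  (hCDinv : CD =
      (fun p : ℝ × ℝ => (p.1 / 3, p.2 / 3)) '' CD ∪
      (fun p : ℝ × ℝ => (p.1 / 3, p.2 / 3 + 2/3)) '' CD ∪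
      (fun p : ℝ × ℝ => (p.1 / 3 + 2/3, p.2 / 3)) '' CD ∪
      (fun p : ℝ × ℝ => (p.1 / 3 + 2/3, p.2 / 3 + 2/3)) '' CD)

include hCDinv in
lemma hCDinv' : CD = F false false '' CD ∪ F false true '' CD ∪
    F true false '' CD ∪ F true true '' CD := by
  have h1 : F false false = fun p : ℝ × ℝ => (p.1 / 3, p.2 / 3) := by
    funext p; simp [F, xd]
  have h2 : F false true = fun p : ℝ × ℝ => (p.1 / 3, p.2 / 3 + 2/3) := by
    funext p; simp only [F, xd]; norm_num
  have h3 : F true false = fun p : ℝ × ℝ => (p.1 / 3 + 2/3, p.2 / 3) := by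
    funext p; simp only [F, xd]; norm_num
  have h4 : F true true = fun p : ℝ × ℝ => (p.1 / 3 + 2/3, p.2 / 3 + 2/3) := by
    funext p; simp only [F, xd]; norm_num
  rw [h1, h2, h3, h4]; exact hCDinv

include hCDinv in
lemma F_image_sub (s t : Bool) : F s t '' CD ⊆ CD := by
  conv_rhs => rw [hCDinv' hCDinv]
  cases s <;> cases t
  · exact (subset_union_left.trans subset_union_left).trans subset_union_left
  · exact (subset_union_right.trans subset_union_left).trans subset_union_left
  · exact subset_union_right.trans subset_union_left
  · exact subset_union_right

include hCDinv in
lemma F_cover {p : ℝ × ℝ} (hp : p ∈ CD) :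
    ∃ s t : Bool, ∃ q ∈ CD, p = F s t q := by
  rw [hCDinv' hCDinv] at hp
  simp only [Set.mem_union, Set.mem_image] at hp
  rcases hp with ((⟨q, hq, rfl⟩ | ⟨q, hq, rfl⟩) | ⟨q, hq, rfl⟩) | ⟨q, hq, rfl⟩
  exacts [⟨false, false, q, hq, rfl⟩, ⟨false, true, q, hq, rfl⟩,
    ⟨true, false, q, hq, rfl⟩, ⟨true, true, q, hq, rfl⟩]

include hCDsub in
lemma mem_unit_square {p : ℝ × ℝ} (hp : p ∈ CD) :
    p.1 ∈ Icc (0:ℝ) 1 ∧ p.2 ∈ Icc (0:ℝ) 1 := by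
  have := hCDsub hp
  rw [Set.mem_Icc] at this
  exact ⟨⟨this.1.1, this.2.1⟩, ⟨this.1.2, this.2.2⟩⟩

include hCDsub hCDne hCDcomp hCDinv in
/-- every pair of digit sequences is realized by a point of `CD` -/
lemma point_mem (b c : ℕ → Bool) : (X b, X c) ∈ CD := by
  classical
  -- iterated maps
  let G : ℕ → ℝ × ℝ → ℝ × ℝ := fun n => Nat.rec id (fun n g => g ∘ F (b n) (c n)) n
  have hG0 : G 0 = id := rfl
  have hGsucc : ∀ n, G (n+1) = G n ∘ F (b n) (c n) := fun n => rfl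
  have hGcont : ∀ n, Continuous (G n) := by
    intro n
    induction n with
    | zero => exact continuous_id
    | succ n ih => rw [hGsucc]; exact ih.comp (F_cont _ _)
  have hGform : ∀ n (p : ℝ × ℝ), G n p =
      ((∑ i ∈ Finset.range n, xd (b i) * (1/3:ℝ)^(i+1)) + p.1 * (1/3:ℝ)^n,
       (∑ i ∈ Finset.range n, xd (c i) * (1/3:ℝ)^(i+1)) + p.2 * (1/3:ℝ)^n) := by
    intro n
    induction n with
    | zero => intro p; simp [hG0]
    | succ n ih =>
      intro p
      rw [hGsucc, Function.comp_apply, ih]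
      rw [Finset.sum_range_succ, Finset.sum_range_succ]
      simp only [F, Prod.mk.injEq]
      constructor <;> ring
  let K : ℕ → Set (ℝ × ℝ) := fun n => G n '' CD
  have hKsub : ∀ n, K (n+1) ⊆ K n := by
    intro n
    show G (n+1) '' CD ⊆ G n '' CD
    rw [hGsucc, image_comp]
    exact image_mono (F_image_sub hCDinv _ _)
  have hKne : ∀ n, (K n).Nonempty := fun n => hCDne.image _
  have hKcomp : ∀ n, IsCompact (K n) := fun n => hCDcomp.image (hGcont n)
  have hKcl : ∀ n, IsClosed (K n) := fun n => (hKcomp n).isClosed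
  obtain ⟨p, hp⟩ := IsCompact.nonempty_iInter_of_sequence_nonempty_isCompact_isClosed
    K hKsub hKne (hKcomp 0) hKcl
  have hpCD : p ∈ CD := by
    have := mem_iInter.1 hp 0
    simpa [K, hG0] using this
  have hest : ∀ n : ℕ, |p.1 - X b| ≤ 2 * (1/3:ℝ)^n ∧ |p.2 - X c| ≤ 2 * (1/3:ℝ)^n := by
    intro n
    have hpK := mem_iInter.1 hp n
    obtain ⟨q, hq, hqp⟩ := hpK
    have hq1 := mem_unit_square hCDsub hq
    rw [hGform n q] at hqp
    have hXb := X_tail b n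
    have hXc := X_tail c n
    have h1 : p.1 = (∑ i ∈ Finset.range n, xd (b i) * (1/3:ℝ)^(i+1)) + q.1 * (1/3:ℝ)^n := by
      rw [← hqp]
    have h2 : p.2 = (∑ i ∈ Finset.range n, xd (c i) * (1/3:ℝ)^(i+1)) + q.2 * (1/3:ℝ)^n := by
      rw [← hqp]
    have hq11 := hq1.1.1; have hq12 := hq1.1.2
    have hq21 := hq1.2.1; have hq22 := hq1.2.2
    have hpn : (0:ℝ) ≤ (1/3:ℝ)^n := by positivity
    constructor <;> rw [abs_le] <;> constructor <;>
      nlinarith [hXb.1, hXb.2, hXc.1, hXc.2,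
        mul_le_mul_of_nonneg_right hq12 hpn, mul_le_mul_of_nonneg_right hq22 hpn,
        mul_nonneg hq11 hpn, mul_nonneg hq21 hpn]
  have hp1 : p.1 - X b = 0 :=
    eq_of_abs_le_geom (by norm_num) (by norm_num) (fun n => (hest n).1)
  have hp2 : p.2 - X c = 0 :=
    eq_of_abs_le_geom (by norm_num) (by norm_num) (fun n => (hest n).2)
  have : p = (X b, X c) := by
    have := sub_eq_zero.1 hp1
    have := sub_eq_zero.1 hp2
    exact Prod.ext (sub_eq_zero.1 hp1) (sub_eq_zero.1 hp2)
  rwa [this] at hpCD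

include hCDsub hCDinv in
lemma CD_sub_pre : ∀ n, CD ⊆ (pre n) ×ˢ (pre n) := by
  intro n
  induction n with
  | zero =>
    intro p hp
    have := mem_unit_square hCDsub hp
    exact ⟨this.1, this.2⟩
  | succ n ih =>
    intro p hp
    obtain ⟨s, t, q, hq, rfl⟩ := F_cover hCDinv hp
    have hq' := ih hq
    constructor
    · show (F s t q).1 ∈ pre (n+1)
      cases s
      · left; exact ⟨q.1, hq'.1, by simp [F, xd]⟩
      · right; exact ⟨q.1, hq'.1, by simp only [F, xd]; norm_num⟩
    · show (F s t q).2 ∈ pre (n+1)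
      cases t
      · left; exact ⟨q.2, hq'.2, by simp [F, xd]⟩
      · right; exact ⟨q.2, hq'.2, by simp only [F, xd]; norm_num⟩

include hCDsub hCDinv in
lemma CD_coords {p : ℝ × ℝ} (hp : p ∈ CD) :
    X (dg p.1) = p.1 ∧ X (dg p.2) = p.2 := by
  have h1 : ∀ m, p.1 ∈ pre m := fun m => (CD_sub_pre hCDsub hCDinv m hp).1
  have h2 : ∀ m, p.2 ∈ pre m := fun m => (CD_sub_pre hCDsub hCDinv m hp).2
  exact ⟨X_dg_eq h1, X_dg_eq h2⟩

end CD

/-! ### The Hölder map onto the unit square -/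

/-- the coordinate coding map -/
def phi (x : ℝ) : ℝ := Y (dg x)

/-- the Hölder map -/
def g (p : ℝ × ℝ) : ℝ × ℝ := (phi p.1, phi p.2)

section CD2

variable {CD : Set (ℝ × ℝ)}
  (hCDsub : CD ⊆ Set.Icc (0, 0) (1, 1))
  (hCDne : CD.Nonempty) (hCDcomp : IsCompact CD)
  (hCDinv : CD =
      (fun p : ℝ × ℝ => (p.1 / 3, p.2 / 3)) '' CD ∪
      (fun p : ℝ × ℝ => (p.1 / 3, p.2 / 3 + 2/3)) '' CD ∪
      (fun p : ℝ × ℝ => (p.1 / 3 + 2/3, p.2 / 3)) '' CD ∪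
      (fun p : ℝ × ℝ => (p.1 / 3 + 2/3, p.2 / 3 + 2/3)) '' CD)

include hCDsub hCDinv in
lemma g_holder : HolderOnWith 2 (Real.toNNReal α) g CD := by
  intro p hp q hq
  have hα := α_pos
  have hcoe : ((Real.toNNReal α : ℝ≥0) : ℝ) = α := Real.coe_toNNReal _ hα.le
  have hcp := CD_coords hCDsub hCDinv hp
  have hcq := CD_coords hCDsub hCDinv hq
  -- real-valued estimate
  have hcoord : ∀ (x y : ℝ), X (dg x) = x → X (dg y) = y → |x - y| ≤ dist p q →
      |phi x - phi y| ≤ 2 * dist p q ^ α := by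
    intro x y hx hy hxy
    have h1 : |Y (dg x) - Y (dg y)| ≤ 2 * |X (dg x) - X (dg y)| ^ α := Y_holder _ _
    rw [hx, hy] at h1
    have h2 : |x - y| ^ α ≤ dist p q ^ α :=
      Real.rpow_le_rpow (abs_nonneg _) hxy hα.le
    calc |phi x - phi y| = |Y (dg x) - Y (dg y)| := rfl
      _ ≤ 2 * |x - y| ^ α := h1
      _ ≤ 2 * dist p q ^ α := by linarith
  have hd1 : |p.1 - q.1| ≤ dist p q := by
    rw [Prod.dist_eq]
    exact le_trans (le_of_eq (Real.dist_eq p.1 q.1).symm) (le_max_left _ _)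
  have hd2 : |p.2 - q.2| ≤ dist p q := by
    rw [Prod.dist_eq]
    exact le_trans (le_of_eq (Real.dist_eq p.2 q.2).symm) (le_max_right _ _)
  have hdist : dist (g p) (g q) ≤ 2 * dist p q ^ α := by
    rw [Prod.dist_eq]
    apply max_le
    · rw [Real.dist_eq]
      exact hcoord _ _ hcp.1 hcq.1 hd1
    · rw [Real.dist_eq]
      exact hcoord _ _ hcp.2 hcq.2 hd2
  -- convert to edist
  rw [edist_dist, edist_dist, hcoe]
  calc ENNReal.ofReal (dist (g p) (g q))
      ≤ ENNReal.ofReal (2 * dist p q ^ α) := ENNReal.ofReal_le_ofReal hdist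
    _ = ENNReal.ofReal 2 * ENNReal.ofReal (dist p q ^ α) :=
        ENNReal.ofReal_mul (by norm_num)
    _ = (2 : ℝ≥0) * ENNReal.ofReal (dist p q) ^ α := by
        rw [ENNReal.ofReal_rpow_of_nonneg dist_nonneg hα.le]
        norm_num
      
include hCDsub hCDne hCDcomp hCDinv in
lemma g_surj : (Set.Ico (0:ℝ) 1) ×ˢ (Set.Ico (0:ℝ) 1) ⊆ g '' CD := by
  rintro ⟨u, v⟩ ⟨hu, hv⟩
  refine ⟨(X (bdig u), X (bdig v)), point_mem hCDsub hCDne hCDcomp hCDinv _ _, ?_⟩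
  show (phi (X (bdig u)), phi (X (bdig v))) = (u, v)
  rw [phi, phi, dg_X, dg_X, Y_bdig u hu, Y_bdig v hv]

include hCDsub hCDne hCDcomp hCDinv in
lemma dimH_lower : ENNReal.ofReal (Real.log 4 / Real.log 3) ≤ dimH CD := by
  have hα := α_pos
  have hr0 : (0:ℝ≥0) < Real.toNNReal α := Real.toNNReal_pos.2 hα
  have himg : dimH (g '' CD) ≤ dimH CD / (Real.toNNReal α : ℝ≥0∞) :=
    (g_holder hCDsub hCDinv).dimH_image_le hr0
  have hsq : (2 : ℝ≥0∞) ≤ dimH (g '' CD) := by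
    have hnhds : (Set.Ico (0:ℝ) 1) ×ˢ (Set.Ico (0:ℝ) 1) ∈ nhds ((1/2 : ℝ), (1/2 : ℝ)) := by
      rw [mem_nhds_iff]
      refine ⟨(Set.Ioo (0:ℝ) 1) ×ˢ (Set.Ioo (0:ℝ) 1), Set.prod_mono Set.Ioo_subset_Ico_self Set.Ioo_subset_Ico_self,
        isOpen_Ioo.prod isOpen_Ioo, ?_⟩
      constructor <;> constructor <;> norm_num
    have hdim : dimH ((Set.Ico (0:ℝ) 1) ×ˢ (Set.Ico (0:ℝ) 1)) = 2 := by
      rw [Real.dimH_of_mem_nhds hnhds]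
      rw [Module.finrank_prod, Module.finrank_self]
      norm_num
    rw [← hdim]
    exact dimH_mono (g_surj hCDsub hCDne hCDcomp hCDinv)
  have hle : (2 : ℝ≥0∞) ≤ dimH CD / (Real.toNNReal α : ℝ≥0∞) := hsq.trans himg
  have hmul : (2 : ℝ≥0∞) * (Real.toNNReal α : ℝ≥0∞) ≤ dimH CD := by
    rw [← ENNReal.le_div_iff_mul_le (Or.inl (by exact_mod_cast hr0.ne'))
      (Or.inl ENNReal.coe_ne_top)]
    exact hle
  have heq : (2 : ℝ≥0∞) * (Real.toNNReal α : ℝ≥0∞) = ENNReal.ofReal (Real.log 4 / Real.log 3) := by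
    have h1 : ((Real.toNNReal α : ℝ≥0) : ℝ≥0∞) = ENNReal.ofReal α := rfl
    rw [h1, show (2:ℝ≥0∞) = ENNReal.ofReal 2 by norm_num,
      ← ENNReal.ofReal_mul (by norm_num)]
    congr 1
    rw [α, show (4:ℝ) = 2^2 by norm_num, Real.log_pow]
    push_cast
    ring
  rwa [heq] at hmul

end CD2


/-! ### Upper bound via coverings -/

/-- composed affine map indexed by a word -/
def mp (n : ℕ) (w : Fin n → Bool × Bool) (p : ℝ × ℝ) : ℝ × ℝ :=
  ((∑ i : Fin n, xd (w i).1 * (1/3:ℝ)^((i:ℕ)+1)) + p.1 * (1/3:ℝ)^n,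
   (∑ i : Fin n, xd (w i).2 * (1/3:ℝ)^((i:ℕ)+1)) + p.2 * (1/3:ℝ)^n)

/-- covering squares -/
def tset (n : ℕ) (w : Fin n → Bool × Bool) : Set (ℝ × ℝ) :=
  mp n w '' (Set.Icc (0, 0) (1, 1))

lemma mp_cons (n : ℕ) (w : Fin n → Bool × Bool) (s t : Bool) (x : ℝ × ℝ) :
    F s t (mp n w x) = mp (n+1) (Fin.cons (s, t) w) x := by
  have hsum : ∀ (sel : Bool × Bool → Bool),
      (∑ i : Fin (n+1), xd (sel ((Fin.cons (s, t) w : Fin (n+1) → Bool × Bool) i))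
          * (1/3:ℝ)^((i:ℕ)+1))
        = xd (sel (s, t)) / 3
          + (∑ i : Fin n, xd (sel (w i)) * (1/3:ℝ)^((i:ℕ)+1)) / 3 := by
    intro sel
    rw [Fin.sum_univ_succ]
    simp only [Fin.cons_zero, Fin.cons_succ, Fin.val_zero, Fin.val_succ]
    rw [Finset.sum_div]
    congr 1
    · ring
    · refine Finset.sum_congr rfl fun i _ => ?_
      ring
  simp only [F, mp, Prod.mk.injEq]
  rw [hsum (fun q => q.1), hsum (fun q => q.2)]
  constructor <;> · rw [pow_succ]; ring

section CD3

variable {CD : Set (ℝ × ℝ)}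
  (hCDsub : CD ⊆ Set.Icc (0, 0) (1, 1))
  (hCDne : CD.Nonempty) (hCDcomp : IsCompact CD)
  (hCDinv : CD =
      (fun p : ℝ × ℝ => (p.1 / 3, p.2 / 3)) '' CD ∪
      (fun p : ℝ × ℝ => (p.1 / 3, p.2 / 3 + 2/3)) '' CD ∪
      (fun p : ℝ × ℝ => (p.1 / 3 + 2/3, p.2 / 3)) '' CD ∪
      (fun p : ℝ × ℝ => (p.1 / 3 + 2/3, p.2 / 3 + 2/3)) '' CD)

include hCDsub hCDinv in
lemma CD_cover (n : ℕ) : CD ⊆ ⋃ w : Fin n → Bool × Bool, tset n w := by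
  induction n with
  | zero =>
    intro p hp
    refine mem_iUnion.2 ⟨fun i => (false, false), p, hCDsub hp, ?_⟩
    simp [mp]
  | succ n ih =>
    intro p hp
    obtain ⟨s, t, q, hq, rfl⟩ := F_cover hCDinv hp
    obtain ⟨w, x, hx, hxq⟩ := mem_iUnion.1 (ih hq)
    refine mem_iUnion.2 ⟨Fin.cons (s, t) w, x, hx, ?_⟩
    rw [← mp_cons, hxq]

lemma tset_diam (n : ℕ) (w : Fin n → Bool × Bool) :
    EMetric.diam (tset n w) ≤ ENNReal.ofReal ((1/3:ℝ)^n) := by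
  apply EMetric.diam_le
  rintro p ⟨x, hx, rfl⟩ q ⟨y, hy, rfl⟩
  rw [edist_dist]
  apply ENNReal.ofReal_le_ofReal
  rw [Set.mem_Icc, Prod.le_def, Prod.le_def] at hx hy
  have hpw : (0:ℝ) ≤ (1/3:ℝ)^n := by positivity
  have hb : ∀ u v : ℝ, 0 ≤ u → u ≤ 1 → 0 ≤ v → v ≤ 1 → ∀ A : ℝ,
      dist (A + u * (1/3:ℝ)^n) (A + v * (1/3:ℝ)^n) ≤ (1/3:ℝ)^n := by
    intro u v hu0 hu1 hv0 hv1 A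
    rw [Real.dist_eq, abs_le]
    constructor <;> nlinarith [mul_le_mul_of_nonneg_right hu1 hpw,
      mul_le_mul_of_nonneg_right hv1 hpw, mul_nonneg hu0 hpw, mul_nonneg hv0 hpw]
  rw [Prod.dist_eq]
  exact max_le (hb x.1 y.1 hx.1.1 hx.2.1 hy.1.1 hy.2.1 _)
    (hb x.2 y.2 hx.1.2 hx.2.2 hy.1.2 hy.2.2 _)


include hCDsub hCDinv in
lemma measure_zero {d : ℝ≥0} (hd : Real.log 4 / Real.log 3 < (d : ℝ)) :
    μH[(d : ℝ)] CD = 0 := by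
  have hlog3 : (0:ℝ) < Real.log 3 := Real.log_pos (by norm_num)
  set c : ℝ := 4 * (1/3:ℝ) ^ (d:ℝ) with hc_def
  have hc0 : (0:ℝ) ≤ c := by positivity
  have h13 : ((1:ℝ)/3) ^ (d:ℝ) = Real.exp (-Real.log 3 * d) := by
    rw [show (1/3:ℝ) = 3⁻¹ by norm_num, Real.rpow_def_of_pos (by norm_num), Real.log_inv]
  have hc1 : c < 1 := by
    have hlog4 : Real.log 4 < (d:ℝ) * Real.log 3 := (div_lt_iff₀ hlog3).1 hd
    rw [hc_def, h13, show (4:ℝ) = Real.exp (Real.log 4) by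
      rw [Real.exp_log]; norm_num, ← Real.exp_add]
    have := Real.exp_lt_exp.2 (show Real.log 4 + -Real.log 3 * (d:ℝ) < 0 by nlinarith)
    rwa [Real.exp_zero] at this
  have hr : Tendsto (fun n : ℕ => ENNReal.ofReal ((1/3:ℝ)^n)) atTop (nhds 0) := by
    have h := tendsto_pow_atTop_nhds_zero_of_lt_one (by norm_num : (0:ℝ) ≤ 1/3) (by norm_num)
    have := (ENNReal.continuous_ofReal.tendsto 0).comp h
    rw [ENNReal.ofReal_zero] at this; exact this
  have hmain := MeasureTheory.Measure.hausdorffMeasure_le_liminf_sum (d:ℝ) CD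
    (fun n : ℕ => ENNReal.ofReal ((1/3:ℝ)^n)) hr tset
    (Eventually.of_forall fun n => tset_diam n)
    (Eventually.of_forall (CD_cover hCDsub hCDinv))
  have hsum : ∀ n : ℕ, (∑ w : Fin n → Bool × Bool, EMetric.diam (tset n w) ^ (d:ℝ))
      ≤ ENNReal.ofReal (c ^ n) := by
    intro n
    have hterm : ∀ w : Fin n → Bool × Bool,
        EMetric.diam (tset n w) ^ (d:ℝ) ≤ ENNReal.ofReal (((1/3:ℝ)^(d:ℝ))^n) := by
      intro w
      calc EMetric.diam (tset n w) ^ (d:ℝ)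
          ≤ (ENNReal.ofReal ((1/3:ℝ)^n)) ^ (d:ℝ) :=
            ENNReal.rpow_le_rpow (tset_diam n w) d.2
        _ = ENNReal.ofReal (((1/3:ℝ)^n) ^ (d:ℝ)) :=
            ENNReal.ofReal_rpow_of_pos (by positivity)
        _ = ENNReal.ofReal (((1/3:ℝ)^(d:ℝ))^n) := by
            rw [← Real.rpow_natCast ((1/3:ℝ)^(d:ℝ)) n, ← Real.rpow_natCast (1/3:ℝ) n,
              ← Real.rpow_mul (by norm_num), ← Real.rpow_mul (by norm_num), mul_comm]
    calc (∑ w : Fin n → Bool × Bool, EMetric.diam (tset n w) ^ (d:ℝ))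
        ≤ ∑ _w : Fin n → Bool × Bool, ENNReal.ofReal (((1/3:ℝ)^(d:ℝ))^n) :=
          Finset.sum_le_sum fun w _ => hterm w
      _ = (Fintype.card (Fin n → Bool × Bool) : ℝ≥0∞)
            * ENNReal.ofReal (((1/3:ℝ)^(d:ℝ))^n) := by
          rw [Finset.sum_const, nsmul_eq_mul, Finset.card_univ]
      _ = ENNReal.ofReal (c ^ n) := by
          rw [show Fintype.card (Fin n → Bool × Bool) = 4^n by
            rw [Fintype.card_fun]; simp]
          rw [← ENNReal.ofReal_natCast (4^n), ← ENNReal.ofReal_mul (by positivity)]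
          congr 1
          push_cast
          rw [hc_def, mul_pow]
  have hlim : Tendsto (fun n : ℕ => ENNReal.ofReal (c ^ n)) atTop (nhds 0) := by
    have h := tendsto_pow_atTop_nhds_zero_of_lt_one hc0 hc1
    have := (ENNReal.continuous_ofReal.tendsto 0).comp h
    rw [ENNReal.ofReal_zero] at this; exact this
  have hliminf : liminf (fun n : ℕ => ∑ w : Fin n → Bool × Bool,
      EMetric.diam (tset n w) ^ (d:ℝ)) atTop
      ≤ liminf (fun n : ℕ => ENNReal.ofReal (c ^ n)) atTop :=
    liminf_le_liminf (Eventually.of_forall hsum)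
  rw [hlim.liminf_eq] at hliminf
  exact le_zero_iff.mp (hmain.trans hliminf)

include hCDsub hCDinv in
lemma dimH_upper : dimH CD ≤ ENNReal.ofReal (Real.log 4 / Real.log 3) := by
  refine dimH_le fun d' hd' => ?_
  by_contra hlt
  push_neg at hlt
  have hD0 : (0:ℝ) ≤ Real.log 4 / Real.log 3 :=
    div_nonneg (Real.log_nonneg (by norm_num)) (le_of_lt (Real.log_pos (by norm_num)))
  have hlt' : Real.log 4 / Real.log 3 < (d' : ℝ) := by
    rwa [← ENNReal.ofReal_coe_nnreal, ENNReal.ofReal_lt_ofReal_iff_of_nonneg hD0] at hlt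
  rw [measure_zero hCDsub hCDinv hlt'] at hd'
  exact ENNReal.zero_ne_top hd'

end CD3

end CantorDustAux

/-- The Hausdorff dimension of the Cantor dust is `log 4 / log 3`. -/
theorem stmt6 (CD : Set (ℝ × ℝ))
    (hCDsub : CD ⊆ Set.Icc (0, 0) (1, 1))
    (hCDne : CD.Nonempty) (hCDcomp : IsCompact CD)
    (hCDinv : CD =
      (fun p : ℝ × ℝ => (p.1 / 3, p.2 / 3)) '' CD ∪
      (fun p : ℝ × ℝ => (p.1 / 3, p.2 / 3 + 2/3)) '' CD ∪
      (fun p : ℝ × ℝ => (p.1 / 3 + 2/3, p.2 / 3)) '' CD ∪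
      (fun p : ℝ × ℝ => (p.1 / 3 + 2/3, p.2 / 3 + 2/3)) '' CD) :
    dimH CD = ENNReal.ofReal (Real.log 4 / Real.log 3) :=
  le_antisymm (CantorDustAux.dimH_upper hCDsub hCDinv)
    (CantorDustAux.dimH_lower hCDsub hCDne hCDcomp hCDinv)
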